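/- Non-convex FedProx convergence (B-local dissimilarity). Assume each F k is differentiable with L-Lipschitz gradient and satisfies the curvature lower bound with constant L₋, where 0 ≤ L₋ < μ and μ̄ := μ − L₋ > 0. Let wᵗ ∈ E, let the local functions be B-dissimilar at wᵗ (with B ≥ 0), and for each device k let w k⁺ be a γ-inexact solution of min h k (0 ≤ γ ≤ 1). Let K ≥ 1 and set ρ := 1/μ − γB/μ − √2·B(1+γ)/(μ̄·√K) − L·B(1+γ)/(μ̄·μ) − L·(1+γ)²·B²/(2μ̄²) − L·B²·(1+γ)²·(2√(2K)+2)/(μ̄²·K). Then the expected objective after one FedProx round satisfies ∑_{s : Fin K → Fin N} (∏ j, p (s j)) · f((1/K)·∑ j, w (s j)⁺) ≤ f(wᵗ) − ρ·‖∇f(wᵗ)‖². -/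

import Mathlib

open scoped BigOperators
open Finset
open scoped RealInnerProductSpace

section Expect

variable {E : Type*} [NormedAddCommGroup E] [InnerProductSpace ℝ E]
variable {N : ℕ} (p : Fin N → ℝ)

private lemma fedprox_cons_prod (K : ℕ) (a : Fin N) (s' : Fin K → Fin N) :
    (∏ j, p ((Fin.cons a s' : Fin (K+1) → Fin N) j)) = p a * ∏ j, p (s' j) := by
  rw [Fin.prod_univ_succ]; simp

private lemma fedprox_cons_sum (K : ℕ) (v : Fin N → E) (a : Fin N) (s' : Fin K → Fin N) :
    (∑ j, v ((Fin.cons a s' : Fin (K+1) → Fin N) j)) = v a + ∑ j, v (s' j) := by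
  rw [Fin.sum_univ_succ]; simp

lemma fedprox_expect_one (hp1 : ∑ k, p k = 1) :
    ∀ K : ℕ, ∑ s : Fin K → Fin N, ∏ j, p (s j) = 1 := by
  intro K
  induction K with
  | zero => simp
  | succ K ih =>
    rw [← ((Fin.consEquiv (fun _ : Fin (K+1) => Fin N)).sum_comp
      (fun s => ∏ j, p (s j))), Fintype.sum_prod_type]
    simp only [Fin.consEquiv_apply, fedprox_cons_prod, ← Finset.mul_sum]
    rw [ih, ← Finset.sum_mul]
    simp [hp1]

lemma fedprox_expect_mean_zero (hp1 : ∑ k, p k = 1) {v : Fin N → E}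
    (hv : ∑ k, p k • v k = 0) :
    ∀ K : ℕ, ∑ s : Fin K → Fin N, (∏ j, p (s j)) • (∑ j, v (s j)) = 0 := by
  intro K
  induction K with
  | zero => simp
  | succ K ih =>
    rw [← ((Fin.consEquiv (fun _ : Fin (K+1) => Fin N)).sum_comp
      (fun s => (∏ j, p (s j)) • (∑ j, v (s j)))), Fintype.sum_prod_type]
    have key : ∀ a : Fin N, (∑ s' : Fin K → Fin N,
        (∏ j, p ((Fin.cons a s' : Fin (K+1) → Fin N) j)) •
          (∑ j, v ((Fin.cons a s' : Fin (K+1) → Fin N) j)))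
        = p a • v a := by
      intro a
      have : ∀ s' : Fin K → Fin N,
          (∏ j, p ((Fin.cons a s' : Fin (K+1) → Fin N) j)) •
            (∑ j, v ((Fin.cons a s' : Fin (K+1) → Fin N) j))
          = p a • ((∏ j, p (s' j)) • v a + (∏ j, p (s' j)) • ∑ j, v (s' j)) := by
        intro s'
        rw [fedprox_cons_prod, fedprox_cons_sum, mul_smul, smul_add]
      rw [Finset.sum_congr rfl (fun s' _ => this s'), ← Finset.smul_sum,
        Finset.sum_add_distrib, ih, add_zero, ← Finset.sum_smul,
        fedprox_expect_one p hp1, one_smul]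
    simp only [Fin.consEquiv_apply, key, ← Finset.sum_smul]
    exact hv

lemma fedprox_expect_normsq (hp1 : ∑ k, p k = 1) {v : Fin N → E}
    (hv : ∑ k, p k • v k = 0) :
    ∀ K : ℕ, ∑ s : Fin K → Fin N, (∏ j, p (s j)) * ‖∑ j, v (s j)‖ ^ 2
      = (K : ℝ) * ∑ k, p k * ‖v k‖ ^ 2 := by
  intro K
  induction K with
  | zero => simp
  | succ K ih =>
    rw [← ((Fin.consEquiv (fun _ : Fin (K+1) => Fin N)).sum_comp
      (fun s => (∏ j, p (s j)) * ‖∑ j, v (s j)‖ ^ 2)), Fintype.sum_prod_type]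
    have key : ∀ a : Fin N, (∑ s' : Fin K → Fin N,
        (∏ j, p ((Fin.cons a s' : Fin (K+1) → Fin N) j)) *
          ‖∑ j, v ((Fin.cons a s' : Fin (K+1) → Fin N) j)‖ ^ 2)
        = p a * (‖v a‖ ^ 2 + (K : ℝ) * ∑ k, p k * ‖v k‖ ^ 2) := by
      intro a
      have expand : ∀ s' : Fin K → Fin N,
          (∏ j, p ((Fin.cons a s' : Fin (K+1) → Fin N) j)) *
            ‖∑ j, v ((Fin.cons a s' : Fin (K+1) → Fin N) j)‖ ^ 2
          = p a * ((∏ j, p (s' j)) * ‖v a‖ ^ 2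
              + 2 * ⟪v a, (∏ j, p (s' j)) • ∑ j, v (s' j)⟫
              + (∏ j, p (s' j)) * ‖∑ j, v (s' j)‖ ^ 2) := by
        intro s'
        rw [fedprox_cons_prod, fedprox_cons_sum]
        have hns : ‖v a + ∑ j, v (s' j)‖ ^ 2
            = ‖v a‖ ^ 2 + 2 * ⟪v a, ∑ j, v (s' j)⟫ + ‖∑ j, v (s' j)‖ ^ 2 := by
          rw [← real_inner_self_eq_norm_sq, ← real_inner_self_eq_norm_sq,
            ← real_inner_self_eq_norm_sq, inner_add_add_self,
            real_inner_comm (∑ j, v (s' j)) (v a)]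
          ring
        rw [hns, real_inner_smul_right]
        ring
      rw [Finset.sum_congr rfl (fun s' _ => expand s'), ← Finset.mul_sum]
      congr 1
      rw [Finset.sum_add_distrib, Finset.sum_add_distrib, ← Finset.sum_mul,
        fedprox_expect_one p hp1, one_mul, ih]
      have : (∑ s' : Fin K → Fin N, 2 * ⟪v a, (∏ j, p (s' j)) • ∑ j, v (s' j)⟫) = 0 := by
        rw [← Finset.mul_sum, ← inner_sum, fedprox_expect_mean_zero p hp1 hv, inner_zero_right,
          mul_zero]
      rw [this, add_zero]
    simp only [Fin.consEquiv_apply, key, mul_add]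
    rw [Finset.sum_add_distrib, ← Finset.sum_mul, hp1, one_mul]
    push_cast
    ring

end Expect
section Analysis

variable {E : Type*} [NormedAddCommGroup E] [InnerProductSpace ℝ E] [CompleteSpace E]

/-- Derivative of `t ↦ f (x + t • v)` is the inner product with the gradient. -/
lemma fedprox_hasDerivAt_comp_line {f : E → ℝ} {G : E} {x v : E} (t : ℝ)
    (hG : HasGradientAt f G (x + t • v)) :
    HasDerivAt (fun t : ℝ => f (x + t • v)) ⟪G, v⟫ t := by
  have hc : HasDerivAt (fun t : ℝ => x + t • v) v t := by
    simpa using ((hasDerivAt_id t).smul_const v).const_add x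
  have := (hG.hasFDerivAt.comp_hasDerivAt t hc)
  simpa [InnerProductSpace.toDual_apply_apply, Function.comp_def] using this

/-- Descent lemma for L-smooth functions. -/
lemma fedprox_descent {f : E → ℝ} {G : E → E} {L : ℝ} (hL : 0 ≤ L)
    (hdiff : ∀ x, HasGradientAt f (G x) x)
    (hlip : ∀ x y, ‖G x - G y‖ ≤ L * ‖x - y‖) (x y : E) :
    f y ≤ f x + ⟪G x, y - x⟫ + L / 2 * ‖y - x‖ ^ 2 := by
  set v := y - x with hv
  have hGcont : Continuous G := by
    have : LipschitzWith (Real.toNNReal L) G := by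
      apply LipschitzWith.of_dist_le_mul
      intro a b
      rw [dist_eq_norm, dist_eq_norm]
      calc ‖G a - G b‖ ≤ L * ‖a - b‖ := hlip a b
        _ = (Real.toNNReal L : ℝ) * ‖a - b‖ := by rw [Real.coe_toNNReal L hL]
    exact this.continuous
  have hcont : Continuous fun t : ℝ => ⟪G (x + t • v), v⟫ := by
    apply Continuous.inner
    · exact hGcont.comp (by continuity)
    · exact continuous_const
  have hderiv : ∀ t ∈ Set.uIcc (0:ℝ) 1,
      HasDerivAt (fun t : ℝ => f (x + t • v)) ⟪G (x + t • v), v⟫ t :=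
    fun t _ => fedprox_hasDerivAt_comp_line t (hdiff _)
  have hint : IntervalIntegrable (fun t : ℝ => ⟪G (x + t • v), v⟫)
      MeasureTheory.volume 0 1 := hcont.intervalIntegrable 0 1
  have heq : f (x + (1:ℝ) • v) - f (x + (0:ℝ) • v)
      = ∫ t in (0:ℝ)..1, ⟪G (x + t • v), v⟫ :=
    (intervalIntegral.integral_eq_sub_of_hasDerivAt hderiv hint).symm
  have hxy : x + (1:ℝ) • v = y := by rw [hv]; abel_nf; simp
  have hx0 : x + (0:ℝ) • v = x := by simp
  rw [hxy, hx0] at heq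
  have hbound : ∀ t ∈ Set.Icc (0:ℝ) 1,
      ⟪G (x + t • v), v⟫ ≤ ⟪G x, v⟫ + L * t * ‖v‖ ^ 2 := by
    intro t ht
    have h1 : ⟪G (x + t • v), v⟫ - ⟪G x, v⟫ = ⟪G (x + t • v) - G x, v⟫ := by
      rw [inner_sub_left]
    have h2 : ⟪G (x + t • v) - G x, v⟫ ≤ ‖G (x + t • v) - G x‖ * ‖v‖ :=
      real_inner_le_norm _ _
    have h3 : ‖G (x + t • v) - G x‖ ≤ L * ‖t • v‖ := by
      have := hlip (x + t • v) x
      simpa using this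
    have h4 : ‖t • v‖ = t * ‖v‖ := by
      rw [norm_smul, Real.norm_eq_abs, abs_of_nonneg ht.1]
    have h5 : ‖G (x + t • v) - G x‖ * ‖v‖ ≤ L * t * ‖v‖ ^ 2 := by
      rw [h4] at h3
      calc ‖G (x + t • v) - G x‖ * ‖v‖ ≤ (L * (t * ‖v‖)) * ‖v‖ :=
            mul_le_mul_of_nonneg_right h3 (norm_nonneg v)
        _ = L * t * ‖v‖ ^ 2 := by ring
    linarith
  have hmono : (∫ t in (0:ℝ)..1, ⟪G (x + t • v), v⟫)
      ≤ ∫ t in (0:ℝ)..1, (⟪G x, v⟫ + L * t * ‖v‖ ^ 2) := by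
    apply intervalIntegral.integral_mono_on (by norm_num) hint
    · apply IntervalIntegrable.add intervalIntegrable_const
      apply Continuous.intervalIntegrable
      continuity
    · exact hbound
  have hrhs : (∫ t in (0:ℝ)..1, (⟪G x, v⟫ + L * t * ‖v‖ ^ 2))
      = ⟪G x, v⟫ + L / 2 * ‖v‖ ^ 2 := by
    rw [intervalIntegral.integral_add intervalIntegrable_const
      (by apply Continuous.intervalIntegrable; continuity)]
    simp only [intervalIntegral.integral_const, smul_eq_mul]
    have : (∫ t in (0:ℝ)..1, L * t * ‖v‖ ^ 2) = L / 2 * ‖v‖ ^ 2 := by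
      have : (fun t : ℝ => L * t * ‖v‖ ^ 2) = fun t : ℝ => (L * ‖v‖ ^ 2) * t := by
        funext t; ring
      rw [this, intervalIntegral.integral_const_mul, integral_id]
      ring
    rw [this]
    ring
  linarith [heq ▸ (hmono.trans_eq hrhs)]

/-- First-order condition for a convex differentiable function. -/
lemma fedprox_convex_inner_le {φ : E → ℝ} (hφ : ConvexOn ℝ Set.univ φ)
    {G x : E} (hG : HasGradientAt φ G x) (y : E) :
    ⟪G, y - x⟫ ≤ φ y - φ x := by
  set v := y - x with hv
  have hψ : HasDerivAt (fun t : ℝ => φ (x + t • v)) ⟪G, v⟫ 0 := by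
    apply fedprox_hasDerivAt_comp_line
    simpa using hG
  have hslope : Filter.Tendsto (fun t : ℝ => (φ (x + t • v) - φ x) / t)
      (nhdsWithin 0 (Set.Ioi 0)) (nhds ⟪G, v⟫) := by
    have := hψ.hasDerivWithinAt (s := Set.Ioi (0:ℝ))
    have h2 := (hasDerivWithinAt_iff_tendsto_slope.mp this)
    have hset : Set.Ioi (0:ℝ) \ {0} = Set.Ioi 0 := by
      ext z
      simp only [Set.mem_diff, Set.mem_Ioi, Set.mem_singleton_iff, and_iff_left_iff_imp]
      exact fun hz => ne_of_gt hz
    rw [hset] at h2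
    apply h2.congr'
    filter_upwards [self_mem_nhdsWithin] with t ht
    simp only [slope_def_field]
    rw [div_eq_inv_mul]
    simp [Set.mem_Ioi] at ht
    field_simp
    simp
  have hub : ∀ᶠ t in nhdsWithin (0:ℝ) (Set.Ioi 0),
      (φ (x + t • v) - φ x) / t ≤ φ y - φ x := by
    filter_upwards [Ioc_mem_nhdsGT_of_mem (Set.mem_Ico.mpr ⟨le_refl (0:ℝ), one_pos⟩)] with t ht
    obtain ⟨ht0, ht1⟩ := ht
    have hconv := hφ.2 (Set.mem_univ x) (Set.mem_univ y)
      (show (0:ℝ) ≤ 1 - t by linarith) (le_of_lt ht0) (by ring)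
    have hpt : (1 - t) • x + t • y = x + t • v := by
      rw [hv]; module
    rw [hpt] at hconv
    rw [div_le_iff₀ ht0]
    have : φ (x + t • v) ≤ (1 - t) * φ x + t * φ y := hconv
    nlinarith
  have := le_of_tendsto hslope hub
  linarith [this]

end Analysis
section Grad

variable {E : Type*} [NormedAddCommGroup E] [InnerProductSpace ℝ E] [CompleteSpace E]

lemma fedprox_hasGradientAt_normsq (c : ℝ) (x : E) :
    HasGradientAt (fun w : E => c / 2 * ‖w‖ ^ 2) (c • x) x := by
  have h1 : HasFDerivAt (fun w : E => ⟪w, w⟫)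
      ((fderivInnerCLM ℝ (x, x)).comp
        ((ContinuousLinearMap.id ℝ E).prod (ContinuousLinearMap.id ℝ E))) x :=
    (hasFDerivAt_id x).inner ℝ (hasFDerivAt_id x)
  have h2 : HasFDerivAt (fun w : E => c / 2 * ⟪w, w⟫)
      ((c / 2) • ((fderivInnerCLM ℝ (x, x)).comp
        ((ContinuousLinearMap.id ℝ E).prod (ContinuousLinearMap.id ℝ E)))) x :=
    h1.const_mul (c / 2)
  have hfun : (fun w : E => c / 2 * ‖w‖ ^ 2) = fun w : E => c / 2 * ⟪w, w⟫ := by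
    funext w; rw [real_inner_self_eq_norm_sq]
  have hclm : ((c / 2) • ((fderivInnerCLM ℝ (x, x)).comp
        ((ContinuousLinearMap.id ℝ E).prod (ContinuousLinearMap.id ℝ E))))
      = InnerProductSpace.toDual ℝ E (c • x) := by
    ext y
    simp [fderivInnerCLM_apply, real_inner_comm, real_inner_smul_left]
    ring
  rw [hasGradientAt_iff_hasFDerivAt, hfun, ← hclm]
  exact h2

lemma fedprox_hasGradientAt_weighted_sum {N : ℕ} (p : Fin N → ℝ) (F : Fin N → E → ℝ)
    (hFdiff : ∀ k, Differentiable ℝ (F k)) (f : E → ℝ)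
    (hf : ∀ w, f w = ∑ k, p k * F k w) (x : E) :
    HasGradientAt f (∑ k, p k • gradient (F k) x) x := by
  have hk : ∀ k : Fin N, HasFDerivAt (fun w => p k * F k w)
      (p k • (InnerProductSpace.toDual ℝ E (gradient (F k) x))) x := by
    intro k
    have h1 : HasFDerivAt (F k) (fderiv ℝ (F k) x) x := (hFdiff k x).hasFDerivAt
    have h2 : InnerProductSpace.toDual ℝ E (gradient (F k) x) = fderiv ℝ (F k) x := by
      rw [gradient]
      exact (InnerProductSpace.toDual ℝ E).apply_symm_apply _
    rw [h2]
    exact h1.const_mul (p k)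
  have hsum : HasFDerivAt (fun w => ∑ k, p k * F k w)
      (∑ k, p k • (InnerProductSpace.toDual ℝ E (gradient (F k) x))) x :=
    HasFDerivAt.fun_sum (fun k _ => hk k)
  have hfun : f = fun w => ∑ k, p k * F k w := funext hf
  rw [hasGradientAt_iff_hasFDerivAt, hfun]
  have : InnerProductSpace.toDual ℝ E (∑ k, p k • gradient (F k) x)
      = ∑ k, p k • (InnerProductSpace.toDual ℝ E (gradient (F k) x)) := by
    rw [map_sum]
    simp
  rw [this]
  exact hsum

end Grad

set_option maxHeartbeats 1000000

/-- Non-convex FedProx convergence (B-local dissimilarity): expected decrease of the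
global objective after one FedProx round. -/
theorem fedprox_nonconvex_descent
    {E : Type*} [NormedAddCommGroup E] [InnerProductSpace ℝ E] [CompleteSpace E]
    {N : ℕ} (hN : 1 ≤ N) (p : Fin N → ℝ)
    (hp : ∀ k, 0 ≤ p k) (hp1 : ∑ k, p k = 1)
    (F : Fin N → E → ℝ) (f : E → ℝ) (hf : ∀ w, f w = ∑ k, p k * F k w)
    {L : ℝ} (hL : 0 ≤ L)
    (hFdiff : ∀ k, Differentiable ℝ (F k))
    (hFlip : ∀ k, LipschitzWith (Real.toNNReal L) (gradient (F k)))
    {Lm μ : ℝ} (hLm : 0 ≤ Lm) (hμ : Lm < μ)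
    (hcurv : ∀ k, ConvexOn ℝ Set.univ (fun w => F k w + (Lm / 2) * ‖w‖ ^ 2))
    (wt : E) {B : ℝ} (hB : 0 ≤ B)
    (hdissim : ∑ k, p k * ‖gradient (F k) wt‖ ^ 2 ≤ B ^ 2 * ‖gradient f wt‖ ^ 2)
    {γ : ℝ} (hγ0 : 0 ≤ γ) (hγ1 : γ ≤ 1)
    (wplus : Fin N → E)
    (hinexact : ∀ k,
      ‖gradient (F k) (wplus k) + μ • (wplus k - wt)‖ ≤ γ * ‖gradient (F k) wt‖)
    {K : ℕ} (hK : 1 ≤ K)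
    (ρ : ℝ)
    (hρ : ρ = 1 / μ - γ * B / μ
        - Real.sqrt 2 * B * (1 + γ) / ((μ - Lm) * Real.sqrt K)
        - L * B * (1 + γ) / ((μ - Lm) * μ)
        - L * (1 + γ) ^ 2 * B ^ 2 / (2 * (μ - Lm) ^ 2)
        - L * B ^ 2 * (1 + γ) ^ 2 * (2 * Real.sqrt (2 * K) + 2) / ((μ - Lm) ^ 2 * K)) :
    ∑ s : Fin K → Fin N, (∏ j, p (s j)) * f ((1 / (K : ℝ)) • ∑ j, wplus (s j))
      ≤ f wt - ρ * ‖gradient f wt‖ ^ 2 := by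
  -- positivity facts
  have hμ0 : 0 < μ := lt_of_le_of_lt hLm hμ
  have hμb : 0 < μ - Lm := sub_pos.mpr hμ
  have hK0 : 0 < (K : ℝ) := by exact_mod_cast hK
  -- gradient of f
  have hGf : ∀ x, HasGradientAt f (∑ k, p k • gradient (F k) x) x :=
    fedprox_hasGradientAt_weighted_sum p F hFdiff f hf
  set Gf : E → E := fun x => ∑ k, p k • gradient (F k) x with hGfdef
  have hgradf : ∀ x, gradient f x = Gf x := fun x => (hGf x).gradient
  -- Lipschitz bound for Gf
  have hlipFk : ∀ k (x y : E), ‖gradient (F k) x - gradient (F k) y‖ ≤ L * ‖x - y‖ := by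
    intro k x y
    have := (hFlip k).dist_le_mul x y
    rw [dist_eq_norm, dist_eq_norm, Real.coe_toNNReal L hL] at this
    exact this
  have hGfLip : ∀ x y, ‖Gf x - Gf y‖ ≤ L * ‖x - y‖ := by
    intro x y
    rw [hGfdef]
    calc ‖(∑ k, p k • gradient (F k) x) - ∑ k, p k • gradient (F k) y‖
        = ‖∑ k, p k • (gradient (F k) x - gradient (F k) y)‖ := by
          rw [← Finset.sum_sub_distrib]; simp [smul_sub]
      _ ≤ ∑ k, ‖p k • (gradient (F k) x - gradient (F k) y)‖ := norm_sum_le _ _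
      _ ≤ ∑ k, p k * (L * ‖x - y‖) := by
          apply Finset.sum_le_sum
          intro k _
          rw [norm_smul, Real.norm_eq_abs, abs_of_nonneg (hp k)]
          exact mul_le_mul_of_nonneg_left (hlipFk k x y) (hp k)
      _ = L * ‖x - y‖ := by rw [← Finset.sum_mul, hp1, one_mul]
  -- strong monotonicity of each gradient
  have hmono : ∀ k (x y : E),
      -(Lm * ‖y - x‖ ^ 2) ≤ ⟪gradient (F k) y - gradient (F k) x, y - x⟫ := by
    intro k x y
    have hGφ : ∀ z : E, HasGradientAt (fun w => F k w + (Lm / 2) * ‖w‖ ^ 2)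
        (gradient (F k) z + Lm • z) z := by
      intro z
      have h1 := ((hFdiff k z).hasGradientAt).hasFDerivAt
      have h2 := (fedprox_hasGradientAt_normsq Lm z).hasFDerivAt
      have h3 := h1.add h2
      rw [hasGradientAt_iff_hasFDerivAt, map_add]
      exact h3
    have hxy := fedprox_convex_inner_le (hcurv k) (hGφ x) y
    have hyx := fedprox_convex_inner_le (hcurv k) (hGφ y) x
    rw [← real_inner_self_eq_norm_sq]
    simp only [inner_add_left, inner_sub_left, inner_sub_right, real_inner_smul_left]
      at hxy hyx ⊢
    have c1 := real_inner_comm x y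
    nlinarith [hxy, hyx, c1]
  -- abbreviations
  set g : E := gradient f wt with hgdef
  set u : Fin N → E := fun k => wplus k - wt with hudef
  -- per-device displacement bound
  have hstep : ∀ k, ‖u k‖ ≤ (1 + γ) / (μ - Lm) * ‖gradient (F k) wt‖ := by
    intro k
    have huk : wplus k - wt = u k := by rw [hudef]
    have hin := hinexact k
    rw [huk] at hin
    have hm := hmono k wt (wplus k)
    rw [huk] at hm
    have hlow : (μ - Lm) * ‖u k‖ ^ 2
        ≤ ⟪(gradient (F k) (wplus k) + μ • u k) - gradient (F k) wt, u k⟫ := by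
      have hexp : ⟪(gradient (F k) (wplus k) + μ • u k) - gradient (F k) wt, u k⟫
          = ⟪gradient (F k) (wplus k) - gradient (F k) wt, u k⟫ + μ * ‖u k‖ ^ 2 := by
        rw [inner_sub_left, inner_add_left, inner_sub_left, real_inner_smul_left,
          real_inner_self_eq_norm_sq]
        ring
      rw [hexp]
      nlinarith [hm]
    have hup : ⟪(gradient (F k) (wplus k) + μ • u k) - gradient (F k) wt, u k⟫
        ≤ (1 + γ) * ‖gradient (F k) wt‖ * ‖u k‖ := by
      calc ⟪(gradient (F k) (wplus k) + μ • u k) - gradient (F k) wt, u k⟫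
          ≤ ‖(gradient (F k) (wplus k) + μ • u k) - gradient (F k) wt‖ * ‖u k‖ :=
            real_inner_le_norm _ _
        _ ≤ (‖gradient (F k) (wplus k) + μ • u k‖ + ‖gradient (F k) wt‖) * ‖u k‖ :=
            mul_le_mul_of_nonneg_right (norm_sub_le _ _) (norm_nonneg _)
        _ ≤ (γ * ‖gradient (F k) wt‖ + ‖gradient (F k) wt‖) * ‖u k‖ :=
            mul_le_mul_of_nonneg_right (add_le_add_left hin _) (norm_nonneg _)
        _ = (1 + γ) * ‖gradient (F k) wt‖ * ‖u k‖ := by ring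
    rcases eq_or_lt_of_le (norm_nonneg (u k)) with h0 | h0
    · rw [← h0]
      positivity
    · have h2 := hlow.trans hup
      have hmul : (μ - Lm) * ‖u k‖ ≤ (1 + γ) * ‖gradient (F k) wt‖ := by
        have h3 : ((μ - Lm) * ‖u k‖) * ‖u k‖ ≤ ((1 + γ) * ‖gradient (F k) wt‖) * ‖u k‖ := by
          linarith [h2]
        exact le_of_mul_le_mul_right h3 h0
      rw [div_mul_eq_mul_div, le_div_iff₀ hμb]
      linarith [hmul]
  -- dissimilarity aggregates
  set S : ℝ := ∑ k, p k * ‖gradient (F k) wt‖ with hSdef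
  have hS0 : 0 ≤ S := Finset.sum_nonneg fun k _ => mul_nonneg (hp k) (norm_nonneg _)
  have hSsq : S ^ 2 ≤ ∑ k, p k * ‖gradient (F k) wt‖ ^ 2 := by
    have hcs := Finset.sum_mul_sq_le_sq_mul_sq Finset.univ
      (fun k => Real.sqrt (p k)) (fun k => Real.sqrt (p k) * ‖gradient (F k) wt‖)
    have he1 : ∀ k : Fin N, Real.sqrt (p k) * (Real.sqrt (p k) * ‖gradient (F k) wt‖)
        = p k * ‖gradient (F k) wt‖ := by
      intro k
      rw [← mul_assoc, Real.mul_self_sqrt (hp k)]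
    have he2 : ∀ k : Fin N, Real.sqrt (p k) ^ 2 = p k := fun k => Real.sq_sqrt (hp k)
    have he3 : ∀ k : Fin N, (Real.sqrt (p k) * ‖gradient (F k) wt‖) ^ 2
        = p k * ‖gradient (F k) wt‖ ^ 2 := by
      intro k
      rw [mul_pow, Real.sq_sqrt (hp k)]
    simp only [he1, he2, he3] at hcs
    rw [hp1, one_mul] at hcs
    exact hcs
  have hS : S ≤ B * ‖g‖ := by
    have h1 : S ^ 2 ≤ (B * ‖g‖) ^ 2 := by
      calc S ^ 2 ≤ ∑ k, p k * ‖gradient (F k) wt‖ ^ 2 := hSsq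
        _ ≤ B ^ 2 * ‖g‖ ^ 2 := hdissim
        _ = (B * ‖g‖) ^ 2 := by ring
    have h2 := Real.sqrt_le_sqrt h1
    rwa [Real.sqrt_sq hS0, Real.sqrt_sq (by positivity)] at h2
  set Q : ℝ := ∑ k, p k * ‖u k‖ ^ 2 with hQdef
  have hQ0 : 0 ≤ Q := Finset.sum_nonneg fun k _ => mul_nonneg (hp k) (by positivity)
  have hQ : Q ≤ (1 + γ) ^ 2 / (μ - Lm) ^ 2 * (B ^ 2 * ‖g‖ ^ 2) := by
    calc Q ≤ ∑ k, p k * ((1 + γ) / (μ - Lm) * ‖gradient (F k) wt‖) ^ 2 := by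
          apply Finset.sum_le_sum
          intro k _
          apply mul_le_mul_of_nonneg_left _ (hp k)
          exact pow_le_pow_left₀ (norm_nonneg _) (hstep k) 2
      _ = (1 + γ) ^ 2 / (μ - Lm) ^ 2 * ∑ k, p k * ‖gradient (F k) wt‖ ^ 2 := by
          rw [Finset.mul_sum]
          apply Finset.sum_congr rfl
          intro k _
          rw [mul_pow, div_pow]
          ring
      _ ≤ (1 + γ) ^ 2 / (μ - Lm) ^ 2 * (B ^ 2 * ‖g‖ ^ 2) := by
          apply mul_le_mul_of_nonneg_left hdissim
          positivity
  set T : ℝ := ∑ k, p k * ‖u k‖ with hTdef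
  have hT0 : 0 ≤ T := Finset.sum_nonneg fun k _ => mul_nonneg (hp k) (norm_nonneg _)
  have hT : T ≤ (1 + γ) / (μ - Lm) * S := by
    rw [hTdef, hSdef, Finset.mul_sum]
    apply Finset.sum_le_sum
    intro k _
    rw [← mul_assoc, mul_comm ((1+γ)/(μ-Lm)) (p k), mul_assoc]
    exact mul_le_mul_of_nonneg_left (hstep k) (hp k)
  have hTsq : T ^ 2 ≤ Q := by
    have hcs := Finset.sum_mul_sq_le_sq_mul_sq Finset.univ
      (fun k => Real.sqrt (p k)) (fun k => Real.sqrt (p k) * ‖u k‖)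
    have he1 : ∀ k : Fin N, Real.sqrt (p k) * (Real.sqrt (p k) * ‖u k‖) = p k * ‖u k‖ := by
      intro k
      rw [← mul_assoc, Real.mul_self_sqrt (hp k)]
    have he2 : ∀ k : Fin N, Real.sqrt (p k) ^ 2 = p k := fun k => Real.sq_sqrt (hp k)
    have he3 : ∀ k : Fin N, (Real.sqrt (p k) * ‖u k‖) ^ 2 = p k * ‖u k‖ ^ 2 := by
      intro k
      rw [mul_pow, Real.sq_sqrt (hp k)]
    simp only [he1, he2, he3] at hcs
    rw [hp1, one_mul] at hcs
    exact hcs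
  -- averaged iterate
  have huk : ∀ k, wplus k - wt = u k := fun k => by rw [hudef]
  set wbar : E := ∑ k, p k • wplus k with hwbardef
  set ubar : E := wbar - wt with hubardef
  have hubar_sum : ubar = ∑ k, p k • u k := by
    rw [hubardef, hudef]
    calc wbar - wt = (∑ k, p k • wplus k) - (∑ k, p k) • wt := by
          rw [hp1, one_smul, hwbardef]
      _ = ∑ k, (p k • wplus k - p k • wt) := by
          rw [Finset.sum_smul, ← Finset.sum_sub_distrib]
      _ = ∑ k, p k • (wplus k - wt) := by
          apply Finset.sum_congr rfl
          intro k _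
          rw [smul_sub]
  have hubar_norm : ‖ubar‖ ≤ T := by
    rw [hubar_sum, hTdef]
    calc ‖∑ k, p k • u k‖ ≤ ∑ k, ‖p k • u k‖ := norm_sum_le _ _
      _ = ∑ k, p k * ‖u k‖ := by
          apply Finset.sum_congr rfl
          intro k _
          rw [norm_smul, Real.norm_eq_abs, abs_of_nonneg (hp k)]
  have hubar_sq : ‖ubar‖ ^ 2 ≤ Q :=
    (pow_le_pow_left₀ (norm_nonneg ubar) hubar_norm 2).trans hTsq
  have hTB : T ≤ (1 + γ) / (μ - Lm) * (B * ‖g‖) :=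
    hT.trans (mul_le_mul_of_nonneg_left hS (by positivity))
  -- the inner product bound
  have hg_eq : g = ∑ k, p k • gradient (F k) wt := by
    rw [hgdef, hgradf wt]
  have hμubar : μ • ubar = (∑ k, p k • (gradient (F k) (wplus k) + μ • u k))
      - ((g + ∑ k, p k • (gradient (F k) (wplus k) - gradient (F k) wt))) := by
    have h1 : μ • ubar = ∑ k, p k • (μ • u k) := by
      rw [hubar_sum, Finset.smul_sum]
      apply Finset.sum_congr rfl
      intro k _
      rw [smul_comm]
    have h2 : ∑ k, p k • (gradient (F k) (wplus k) + μ • u k)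
        = (∑ k, p k • gradient (F k) (wplus k)) + ∑ k, p k • (μ • u k) := by
      rw [← Finset.sum_add_distrib]
      apply Finset.sum_congr rfl
      intro k _
      rw [smul_add]
    have h3 : g + ∑ k, p k • (gradient (F k) (wplus k) - gradient (F k) wt)
        = ∑ k, p k • gradient (F k) (wplus k) := by
      rw [hg_eq, ← Finset.sum_add_distrib]
      apply Finset.sum_congr rfl
      intro k _
      rw [← smul_add]
      congr 1
      abel
    rw [h1, h2, h3]
    abel
  have hE : ‖∑ k, p k • (gradient (F k) (wplus k) + μ • u k)‖ ≤ γ * S := by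
    calc ‖∑ k, p k • (gradient (F k) (wplus k) + μ • u k)‖
        ≤ ∑ k, ‖p k • (gradient (F k) (wplus k) + μ • u k)‖ := norm_sum_le _ _
      _ ≤ ∑ k, p k * (γ * ‖gradient (F k) wt‖) := by
          apply Finset.sum_le_sum
          intro k _
          rw [norm_smul, Real.norm_eq_abs, abs_of_nonneg (hp k)]
          apply mul_le_mul_of_nonneg_left _ (hp k)
          rw [← huk k]
          exact hinexact k
      _ = γ * S := by
          rw [hSdef, Finset.mul_sum]
          apply Finset.sum_congr rfl
          intro k _
          ring
  have hDnorm : ‖∑ k, p k • (gradient (F k) (wplus k) - gradient (F k) wt)‖ ≤ L * T := by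
    calc ‖∑ k, p k • (gradient (F k) (wplus k) - gradient (F k) wt)‖
        ≤ ∑ k, ‖p k • (gradient (F k) (wplus k) - gradient (F k) wt)‖ := norm_sum_le _ _
      _ ≤ ∑ k, p k * (L * ‖u k‖) := by
          apply Finset.sum_le_sum
          intro k _
          rw [norm_smul, Real.norm_eq_abs, abs_of_nonneg (hp k)]
          apply mul_le_mul_of_nonneg_left _ (hp k)
          rw [← huk k]
          exact hlipFk k (wplus k) wt
      _ = L * T := by
          rw [hTdef, Finset.mul_sum]
          apply Finset.sum_congr rfl
          intro k _
          ring
  have hinner : μ * ⟪g, ubar⟫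
      ≤ -‖g‖ ^ 2 + γ * B * ‖g‖ ^ 2 + L * ((1 + γ) / (μ - Lm) * B) * ‖g‖ ^ 2 := by
    have heq : μ * ⟪g, ubar⟫
        = ⟪g, ∑ k, p k • (gradient (F k) (wplus k) + μ • u k)⟫ - ‖g‖ ^ 2
          - ⟪g, ∑ k, p k • (gradient (F k) (wplus k) - gradient (F k) wt)⟫ := by
      rw [← real_inner_smul_right, hμubar, inner_sub_right, inner_add_right,
        real_inner_self_eq_norm_sq]
      ring
    have h1 : ⟪g, ∑ k, p k • (gradient (F k) (wplus k) + μ • u k)⟫ ≤ γ * B * ‖g‖ ^ 2 := by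
      calc ⟪g, ∑ k, p k • (gradient (F k) (wplus k) + μ • u k)⟫
          ≤ ‖g‖ * ‖∑ k, p k • (gradient (F k) (wplus k) + μ • u k)‖ := real_inner_le_norm _ _
        _ ≤ ‖g‖ * (γ * S) := mul_le_mul_of_nonneg_left hE (norm_nonneg g)
        _ ≤ ‖g‖ * (γ * (B * ‖g‖)) :=
            mul_le_mul_of_nonneg_left (mul_le_mul_of_nonneg_left hS hγ0) (norm_nonneg g)
        _ = γ * B * ‖g‖ ^ 2 := by ring
    have h2 : -⟪g, ∑ k, p k • (gradient (F k) (wplus k) - gradient (F k) wt)⟫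
        ≤ L * ((1 + γ) / (μ - Lm) * B) * ‖g‖ ^ 2 := by
      calc -⟪g, ∑ k, p k • (gradient (F k) (wplus k) - gradient (F k) wt)⟫
          = ⟪g, -∑ k, p k • (gradient (F k) (wplus k) - gradient (F k) wt)⟫ := by
            rw [inner_neg_right]
        _ ≤ ‖g‖ * ‖-∑ k, p k • (gradient (F k) (wplus k) - gradient (F k) wt)‖ :=
            real_inner_le_norm _ _
        _ = ‖g‖ * ‖∑ k, p k • (gradient (F k) (wplus k) - gradient (F k) wt)‖ := by
            rw [norm_neg]
        _ ≤ ‖g‖ * (L * T) := mul_le_mul_of_nonneg_left hDnorm (norm_nonneg g)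
        _ ≤ ‖g‖ * (L * ((1 + γ) / (μ - Lm) * (B * ‖g‖))) :=
            mul_le_mul_of_nonneg_left (mul_le_mul_of_nonneg_left hTB hL) (norm_nonneg g)
        _ = L * ((1 + γ) / (μ - Lm) * B) * ‖g‖ ^ 2 := by ring
    linarith [heq, h1, h2]
  -- descent to the averaged iterate
  have hfwbar : f wbar ≤ f wt + ⟪g, ubar⟫ + L / 2 * ‖ubar‖ ^ 2 := by
    have hd := fedprox_descent hL hGf hGfLip wt wbar
    rw [← hubardef, ← hg_eq] at hd
    exact hd
  -- sampling analysis
  set v : Fin N → E := fun k => wplus k - wbar with hvdef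
  have hv0 : ∑ k, p k • v k = 0 := by
    rw [hvdef]
    have : ∑ k, p k • (wplus k - wbar) = (∑ k, p k • wplus k) - (∑ k, p k) • wbar := by
      rw [Finset.sum_smul, ← Finset.sum_sub_distrib]
      apply Finset.sum_congr rfl
      intro k _
      rw [smul_sub]
    rw [this, hp1, one_smul, hwbardef, sub_self]
  set Qv : ℝ := ∑ k, p k * ‖v k‖ ^ 2 with hQvdef
  have hQv : Qv ≤ Q := by
    have hexp : ∀ k : Fin N, ‖v k‖ ^ 2 = ‖u k‖ ^ 2 - 2 * ⟪u k, ubar⟫ + ‖ubar‖ ^ 2 := by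
      intro k
      have hvu : v k = u k - ubar := by
        rw [hvdef, hudef, hubardef]
        show wplus k - wbar = (wplus k - wt) - (wbar - wt)
        abel
      rw [hvu, ← real_inner_self_eq_norm_sq, inner_sub_sub_self,
        real_inner_self_eq_norm_sq, real_inner_self_eq_norm_sq, real_inner_comm ubar (u k)]
      ring
    have hsum : Qv = Q - 2 * ⟪ubar, ubar⟫ + ‖ubar‖ ^ 2 := by
      rw [hQvdef, hQdef]
      simp only [hexp]
      have hsplit : ∀ k : Fin N, p k * (‖u k‖ ^ 2 - 2 * ⟪u k, ubar⟫ + ‖ubar‖ ^ 2)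
          = p k * ‖u k‖ ^ 2 - 2 * ⟪p k • u k, ubar⟫ + p k * ‖ubar‖ ^ 2 := by
        intro k
        rw [real_inner_smul_left]
        ring
      simp only [hsplit]
      rw [Finset.sum_add_distrib, Finset.sum_sub_distrib, ← Finset.sum_mul, hp1, one_mul]
      have hmid2 : ∑ k, 2 * ⟪p k • u k, ubar⟫ = 2 * ⟪ubar, ubar⟫ := by
        rw [← Finset.mul_sum, ← sum_inner, ← hubar_sum]
      rw [hmid2]
    rw [hsum, real_inner_self_eq_norm_sq]
    nlinarith [sq_nonneg ‖ubar‖]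
  have hws : ∀ s : Fin K → Fin N, (1 / (K:ℝ)) • (∑ j, wplus (s j)) - wbar
      = (1 / (K:ℝ)) • ∑ j, v (s j) := by
    intro s
    have h1 : ∑ j, v (s j) = (∑ j, wplus (s j)) - (K:ℝ) • wbar := by
      rw [hvdef]
      calc ∑ j : Fin K, (wplus (s j) - wbar)
          = (∑ j, wplus (s j)) - ∑ _j : Fin K, wbar := Finset.sum_sub_distrib _ _
        _ = (∑ j, wplus (s j)) - (K:ℝ) • wbar := by
            rw [Finset.sum_const, Finset.card_univ, Fintype.card_fin,
              ← Nat.cast_smul_eq_nsmul ℝ]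
    rw [h1, smul_sub, smul_smul]
    congr 1
    rw [one_div, inv_mul_cancel₀ (ne_of_gt hK0), one_smul]
  have hdescent_s : ∀ s : Fin K → Fin N,
      f ((1 / (K:ℝ)) • ∑ j, wplus (s j)) ≤ f wbar + ⟪Gf wbar, (1/(K:ℝ)) • ∑ j, v (s j)⟫
        + L / 2 * ‖(1/(K:ℝ)) • ∑ j, v (s j)‖ ^ 2 := by
    intro s
    have hd := fedprox_descent hL hGf hGfLip wbar ((1 / (K:ℝ)) • ∑ j, wplus (s j))
    rw [hws s] at hd
    exact hd
  have hweight : ∀ s : Fin K → Fin N, 0 ≤ ∏ j, p (s j) :=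
    fun s => Finset.prod_nonneg fun j _ => hp _
  have hmid : ∑ s : Fin K → Fin N,
      (∏ j, p (s j)) * ⟪Gf wbar, (1/(K:ℝ)) • ∑ j, v (s j)⟫ = 0 := by
    have hterm : ∀ s : Fin K → Fin N,
        (∏ j, p (s j)) * ⟪Gf wbar, (1/(K:ℝ)) • ∑ j, v (s j)⟫
        = (1/(K:ℝ)) * ⟪Gf wbar, (∏ j, p (s j)) • ∑ j, v (s j)⟫ := by
      intro s
      rw [real_inner_smul_right, real_inner_smul_right]
      ring
    simp only [hterm]
    rw [← Finset.mul_sum, ← inner_sum, fedprox_expect_mean_zero p hp1 hv0 K,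
      inner_zero_right, mul_zero]
  have hquad : ∑ s : Fin K → Fin N,
      (∏ j, p (s j)) * ‖(1/(K:ℝ)) • ∑ j, v (s j)‖ ^ 2 = (1/(K:ℝ)) * Qv := by
    have hterm : ∀ s : Fin K → Fin N,
        (∏ j, p (s j)) * ‖(1/(K:ℝ)) • ∑ j, v (s j)‖ ^ 2
        = (1/(K:ℝ))^2 * ((∏ j, p (s j)) * ‖∑ j, v (s j)‖ ^ 2) := by
      intro s
      rw [norm_smul, Real.norm_eq_abs, abs_of_nonneg (by positivity : (0:ℝ) ≤ 1/(K:ℝ)),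
        mul_pow]
      ring
    simp only [hterm]
    rw [← Finset.mul_sum, fedprox_expect_normsq p hp1 hv0 K, ← hQvdef]
    field_simp
  have hmain : ∑ s : Fin K → Fin N, (∏ j, p (s j)) * f ((1 / (K : ℝ)) • ∑ j, wplus (s j))
      ≤ f wbar + L / (2 * (K:ℝ)) * Qv := by
    calc ∑ s : Fin K → Fin N, (∏ j, p (s j)) * f ((1 / (K : ℝ)) • ∑ j, wplus (s j))
        ≤ ∑ s : Fin K → Fin N, (∏ j, p (s j)) *
            (f wbar + ⟪Gf wbar, (1/(K:ℝ)) • ∑ j, v (s j)⟫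
              + L / 2 * ‖(1/(K:ℝ)) • ∑ j, v (s j)‖ ^ 2) := by
          apply Finset.sum_le_sum
          intro s _
          exact mul_le_mul_of_nonneg_left (hdescent_s s) (hweight s)
      _ = (∑ s : Fin K → Fin N, (∏ j, p (s j))) * f wbar
          + (∑ s : Fin K → Fin N, (∏ j, p (s j)) * ⟪Gf wbar, (1/(K:ℝ)) • ∑ j, v (s j)⟫)
          + L / 2 * ∑ s : Fin K → Fin N,
              (∏ j, p (s j)) * ‖(1/(K:ℝ)) • ∑ j, v (s j)‖ ^ 2 := by
          have hterm : ∀ s : Fin K → Fin N, (∏ j, p (s j)) *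
              (f wbar + ⟪Gf wbar, (1/(K:ℝ)) • ∑ j, v (s j)⟫
                + L / 2 * ‖(1/(K:ℝ)) • ∑ j, v (s j)‖ ^ 2)
              = (∏ j, p (s j)) * f wbar
                + (∏ j, p (s j)) * ⟪Gf wbar, (1/(K:ℝ)) • ∑ j, v (s j)⟫
                + L / 2 * ((∏ j, p (s j)) * ‖(1/(K:ℝ)) • ∑ j, v (s j)‖ ^ 2) := by
            intro s
            ring
          rw [Finset.sum_congr rfl fun s _ => hterm s, Finset.sum_add_distrib,
            Finset.sum_add_distrib, ← Finset.sum_mul, ← Finset.mul_sum]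
      _ = f wbar + 0 + L / 2 * ((1/(K:ℝ)) * Qv) := by
          rw [fedprox_expect_one p hp1 K, one_mul, hmid, hquad]
      _ = f wbar + L / (2 * (K:ℝ)) * Qv := by
          rw [add_zero]
          congr 1
          field_simp
  -- final arithmetic
  have hG2 : (0:ℝ) ≤ ‖g‖ ^ 2 := by positivity
  have hIP : ⟪g, ubar⟫ ≤ (-1 + γ * B + L * ((1 + γ) / (μ - Lm) * B)) * ‖g‖ ^ 2 / μ := by
    rw [le_div_iff₀ hμ0]
    calc ⟪g, ubar⟫ * μ = μ * ⟪g, ubar⟫ := mul_comm _ _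
      _ ≤ -‖g‖ ^ 2 + γ * B * ‖g‖ ^ 2 + L * ((1 + γ) / (μ - Lm) * B) * ‖g‖ ^ 2 := hinner
      _ = (-1 + γ * B + L * ((1 + γ) / (μ - Lm) * B)) * ‖g‖ ^ 2 := by ring
  have hρ2 : ρ ≤ 1/μ - γ*B/μ - L*B*(1+γ)/((μ-Lm)*μ)
      - L*(1+γ)^2*B^2/(2*(μ-Lm)^2) - L*(1+γ)^2*B^2/(2*(μ-Lm)^2*(K:ℝ)) := by
    rw [hρ]
    have key1 : 0 ≤ Real.sqrt 2 * B * (1+γ) / ((μ-Lm) * Real.sqrt (K:ℝ)) := by positivity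
    have key2 : L*(1+γ)^2*B^2/(2*(μ-Lm)^2*(K:ℝ))
        ≤ L*B^2*(1+γ)^2*(2*Real.sqrt (2*(K:ℝ))+2)/((μ-Lm)^2*(K:ℝ)) := by
      rw [div_le_div_iff₀ (by positivity) (by positivity)]
      have hs := Real.sqrt_nonneg (2*(K:ℝ))
      have hc : (0:ℝ) ≤ L * (1+γ)^2 * B^2 * ((μ-Lm)^2 * (K:ℝ)) := by positivity
      nlinarith [hc, hs]
    linarith
  have h5 : L / 2 * Q ≤ L / 2 * ((1+γ)^2/(μ-Lm)^2 * (B^2 * ‖g‖^2)) :=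
    mul_le_mul_of_nonneg_left hQ (by positivity)
  have h6 : L / (2*(K:ℝ)) * Qv ≤ L / (2*(K:ℝ)) * ((1+γ)^2/(μ-Lm)^2 * (B^2 * ‖g‖^2)) :=
    mul_le_mul_of_nonneg_left (hQv.trans hQ) (by positivity)
  have h4 : L / 2 * ‖ubar‖^2 ≤ L / 2 * Q := mul_le_mul_of_nonneg_left hubar_sq (by positivity)
  have hid : (-1 + γ * B + L * ((1 + γ) / (μ - Lm) * B)) * ‖g‖ ^ 2 / μ
      + L / 2 * ((1+γ)^2/(μ-Lm)^2 * (B^2 * ‖g‖^2))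
      + L / (2*(K:ℝ)) * ((1+γ)^2/(μ-Lm)^2 * (B^2 * ‖g‖^2))
      = -(1/μ - γ*B/μ - L*B*(1+γ)/((μ-Lm)*μ)
        - L*(1+γ)^2*B^2/(2*(μ-Lm)^2) - L*(1+γ)^2*B^2/(2*(μ-Lm)^2*(K:ℝ))) * ‖g‖ ^ 2 := by
    field_simp
    ring
  have h7 : ρ * ‖g‖ ^ 2 ≤ (1/μ - γ*B/μ - L*B*(1+γ)/((μ-Lm)*μ)
      - L*(1+γ)^2*B^2/(2*(μ-Lm)^2) - L*(1+γ)^2*B^2/(2*(μ-Lm)^2*(K:ℝ))) * ‖g‖ ^ 2 :=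
    mul_le_mul_of_nonneg_right hρ2 hG2
  linarith [hmain, hfwbar, hIP, h4, h5, h6, hid, h7]
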